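/- Let m ≥ 1 and let k_1,…,k_m, l_1,…,l_m be nonnegative integers with k_1 ≥ 1 and l_m ≥ 1, and set L_0 = 0, L_i = l_1 + ⋯ + l_i. Then for every λ ∈ ℂ that is not a positive integer, the family ∏_{i=1}^m [ 1/n_{L_{i−1}+1}^{k_i} · ∏_{j=L_{i−1}+1}^{L_i} 1/(n_j − λ) ], indexed by strictly decreasing tuples of positive integers n_1 > n_2 > ⋯ > n_{L_m} > 0, is absolutely summable; i.e. the series defining f({k_i,l_i}_{i=1}^m; λ) converges absolutely at every λ ∈ ℂ outside the positive integers. -/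

import Mathlib

/-- Strictly decreasing sequences of positive integers of length `L`
(encoded as functions `ℕ → ℕ` vanishing from `L` on). -/
def DecSeq (L : ℕ) : Type :=
  {n : ℕ → ℕ //
    (∀ i j : ℕ, i < j → j < L → n j < n i) ∧ (∀ i, i < L → 0 < n i) ∧ ∀ i, L ≤ i → n i = 0}

/-- `Lpart m l i = l₁ + ⋯ + l_{i-1}` (0-indexed: the sum of the `l j` for `j < i`),
i.e. the flat index of the first entry of the `i`-th block. -/
def Lpart (m : ℕ) (l : Fin m → ℕ) (i : Fin m) : ℕ :=
  ∑ j : Fin m, if j < i then l j else 0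

/-- The generating function
`f({kᵢ,lᵢ}ᵢ; λ) = Σ_{n₁ > ⋯ > n_{L_m} > 0} ∏ᵢ [ 1/n_{L_{i-1}+1}^{kᵢ} ∏_j 1/(n_j - λ) ]`. -/
noncomputable def genF (m : ℕ) (k l : Fin m → ℕ) (lam : ℂ) : ℂ :=
  ∑' n : DecSeq (∑ j, l j),
    ∏ i : Fin m,
      (1 / ((n.1 (Lpart m l i) : ℂ)) ^ k i *
        ∏ j ∈ Finset.Ico (Lpart m l i) (Lpart m l i + l i), 1 / ((n.1 j : ℂ) - lam))

/- ### Auxiliary material -/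

/-- Products of a summable nonnegative function over a pi type are summable. -/
lemma aux_summable_pi_prod {f : ℕ → ℝ} (hf : Summable f) (h0 : ∀ n, 0 ≤ f n) :
    ∀ L : ℕ, Summable (fun v : Fin L → ℕ => ∏ j, f (v j)) := by
  intro L
  induction L with
  | zero =>
    haveI : Unique (Fin 0 → ℕ) := ⟨⟨fun i => i.elim0⟩, fun v => funext fun i => i.elim0⟩
    exact Summable.of_finite
  | succ L ih =>
    have hf' : (0 : ℕ → ℝ) ≤ f := fun n => h0 n
    have hg' : (0 : (Fin L → ℕ) → ℝ) ≤ fun v => ∏ j, f (v j) :=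
      fun v => Finset.prod_nonneg fun j _ => h0 _
    have h2' := Summable.mul_of_nonneg hf ih hf' hg'
    have h2 : Summable (fun p : ℕ × (Fin L → ℕ) => f p.1 * ∏ j, f (p.2 j)) := by
      convert h2' using 2
    refine (Equiv.summable_iff (Fin.consEquiv (fun _ : Fin (L + 1) => ℕ))).mp ?_
    have heq : ((fun v : Fin (L + 1) → ℕ => ∏ j, f (v j)) ∘
        (Fin.consEquiv (fun _ : Fin (L + 1) => ℕ)))
        = fun p : ℕ × (Fin L → ℕ) => f p.1 * ∏ j, f (p.2 j) := by
      funext p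
      simp [Fin.consEquiv, Fin.prod_univ_succ]
    rw [heq]
    exact h2

/-- The blocks `[Lpart i, Lpart i + l i)` tile `[0, ∑ l)`. -/
lemma aux_prod_blocks {M : Type*} [CommMonoid M] (m : ℕ) (l : Fin m → ℕ) (g : ℕ → M) :
    (∏ i : Fin m, ∏ j ∈ Finset.Ico (Lpart m l i) (Lpart m l i + l i), g j)
      = ∏ j ∈ Finset.range (∑ j, l j), g j := by
  classical
  set l' : ℕ → ℕ := fun j => if h : j < m then l ⟨j, h⟩ else 0 with hl'
  set Q : ℕ → ℕ := fun t => ∑ j ∈ Finset.range t, l' j with hQ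
  have hQsucc : ∀ t, Q (t + 1) = Q t + l' t := fun t => Finset.sum_range_succ _ t
  have hA : ∀ i : Fin m, Lpart m l i = Q i.val := by
    intro i
    have h1 : Lpart m l i = ∑ j : Fin m, (fun t => if t < i.val then l' t else 0) j.val := by
      refine Finset.sum_congr rfl fun j _ => ?_
      simp only [Fin.lt_def]
      split
      · simp [hl', j.isLt]
      · rfl
    rw [h1, Fin.sum_univ_eq_sum_range (fun t => if t < i.val then l' t else 0) m]
    rw [← Finset.sum_filter]
    congr 1
    ext t
    simp only [Finset.mem_filter, Finset.mem_range]
    constructor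
    · rintro ⟨_, ht⟩; exact ht
    · intro ht; exact ⟨lt_of_lt_of_le ht (le_of_lt i.isLt), ht⟩
  have hB : (∑ j, l j) = Q m := by
    have h1 : (∑ j : Fin m, l j) = ∑ j : Fin m, (fun t => l' t) j.val := by
      refine Finset.sum_congr rfl fun j _ => ?_
      simp [hl', j.isLt]
    rw [h1, Fin.sum_univ_eq_sum_range l' m]
  have hC : ∀ t : ℕ, (∏ i ∈ Finset.range t, ∏ j ∈ Finset.Ico (Q i) (Q (i + 1)), g j)
      = ∏ j ∈ Finset.range (Q t), g j := by
    intro t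
    induction t with
    | zero => simp [hQ]
    | succ t ih =>
      rw [Finset.prod_range_succ, ih, Finset.range_eq_Ico, Finset.range_eq_Ico]
      exact Finset.prod_Ico_consecutive g (Nat.zero_le _)
        (show Q t ≤ Q (t + 1) by rw [hQsucc]; exact Nat.le_add_right _ _)
  have h1 : (∏ i : Fin m, ∏ j ∈ Finset.Ico (Lpart m l i) (Lpart m l i + l i), g j)
      = ∏ i : Fin m, (fun t => ∏ j ∈ Finset.Ico (Q t) (Q (t + 1)), g j) i.val := by
    refine Finset.prod_congr rfl fun i _ => ?_
    have hli : l i = l' i.val := by simp [hl', i.isLt]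
    rw [hA i, hli, ← hQsucc]
  rw [h1, Fin.prod_univ_eq_prod_range
    (fun t => ∏ j ∈ Finset.Ico (Q t) (Q (t + 1)), g j) m, hC, hB]

/-- An absolute bound `n ≤ C ‖n - λ‖` uniformly in `n ≥ 1`. -/
lemma aux_exists_C (lam : ℂ) (hlam : ∀ n : ℕ, 0 < n → lam ≠ (n : ℂ)) :
    ∃ C : ℝ, 2 ≤ C ∧ ∀ n : ℕ, 1 ≤ n → (n : ℝ) ≤ C * ‖(n : ℂ) - lam‖ := by
  obtain ⟨N, hN⟩ : ∃ N : ℕ, 2 * ‖lam‖ ≤ N := exists_nat_ge _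
  set S : ℝ := ∑ j ∈ Finset.range (N + 1), (j : ℝ) / ‖(j : ℂ) - lam‖ with hS
  have hS0 : 0 ≤ S :=
    Finset.sum_nonneg fun j _ => div_nonneg (Nat.cast_nonneg _) (norm_nonneg _)
  refine ⟨2 + S, by linarith, ?_⟩
  intro n hn
  have hne : ((n : ℂ) - lam) ≠ 0 := by
    intro h
    exact hlam n hn (by linear_combination -h)
  have hpos : 0 < ‖(n : ℂ) - lam‖ := norm_pos_iff.mpr hne
  by_cases hcase : n ≤ N
  · have hmem : n ∈ Finset.range (N + 1) := Finset.mem_range.mpr (by omega)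
    have hterm : (n : ℝ) / ‖(n : ℂ) - lam‖ ≤ S :=
      Finset.single_le_sum (f := fun j : ℕ => (j : ℝ) / ‖(j : ℂ) - lam‖)
        (fun j _ => div_nonneg (Nat.cast_nonneg _) (norm_nonneg _)) hmem
    have := (div_le_iff₀ hpos).mp hterm
    nlinarith [norm_nonneg ((n : ℂ) - lam)]
  · have h1 : (N : ℝ) ≤ (n : ℝ) := by exact_mod_cast Nat.le_of_lt (by omega)
    have h2 : (n : ℝ) - ‖lam‖ ≤ ‖(n : ℂ) - lam‖ := by
      have := norm_sub_norm_le ((n : ℂ)) lam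
      simpa using this
    nlinarith [mul_nonneg hS0 (norm_nonneg ((n : ℂ) - lam)), norm_nonneg ((n : ℂ) - lam)]

/-- `Lpart` of the first index is `0`. -/
lemma aux_Lpart_zero (m : ℕ) (hm : 1 ≤ m) (l : Fin m → ℕ) : Lpart m l ⟨0, hm⟩ = 0 := by
  refine Finset.sum_eq_zero fun j _ => ?_
  rw [if_neg]
  simp [Fin.lt_def]

/-- Each block ends within `[0, ∑ l)`. -/
lemma aux_Lpart_add_le (m : ℕ) (l : Fin m → ℕ) (i : Fin m) :
    Lpart m l i + l i ≤ ∑ j, l j := by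
  classical
  have h1 : Lpart m l i + l i
      = ∑ j : Fin m, ((if j < i then l j else 0) + (if j = i then l j else 0)) := by
    rw [Finset.sum_add_distrib, Finset.sum_ite_eq' Finset.univ i l,
      if_pos (Finset.mem_univ i)]
    rfl
  rw [h1]
  refine Finset.sum_le_sum fun j _ => ?_
  rcases lt_trichotomy j i with h | h | h
  · simp [h, Fin.ne_of_lt h]
  · simp [h]
  · simp [Fin.ne_of_gt h, not_lt_of_gt h]

/-- Each block starts strictly within `[0, ∑ l)` provided the last length is positive. -/
lemma aux_Lpart_lt (m : ℕ) (hm : 1 ≤ m) (l : Fin m → ℕ) (hl : 1 ≤ l ⟨m - 1, by omega⟩)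
    (i : Fin m) : Lpart m l i < ∑ j, l j := by
  classical
  have hmlt : m - 1 < m := by omega
  have h1 : Lpart m l i + l ⟨m - 1, hmlt⟩
      = ∑ j : Fin m, ((if j < i then l j else 0) + (if j = ⟨m - 1, hmlt⟩ then l j else 0)) := by
    rw [Finset.sum_add_distrib, Finset.sum_ite_eq' Finset.univ (⟨m - 1, hmlt⟩ : Fin m) l,
      if_pos (Finset.mem_univ _)]
    rfl
  have h2 : Lpart m l i + l ⟨m - 1, hmlt⟩ ≤ ∑ j, l j := by
    rw [h1]
    refine Finset.sum_le_sum fun j _ => ?_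
    by_cases hj : j < i
    · have hjne : j ≠ ⟨m - 1, hmlt⟩ := by
        intro h
        have h3 : (j : ℕ) < (i : ℕ) := hj
        have h5 : (j : ℕ) = m - 1 := congrArg Fin.val h
        have h4 : (i : ℕ) < m := i.isLt
        omega
      simp [hj, hjne]
    · rw [if_neg hj]
      by_cases hj2 : j = ⟨m - 1, hmlt⟩ <;> simp [hj2]
  have h3 : 1 ≤ l ⟨m - 1, hmlt⟩ := hl
  omega

/-- The family defining `f({kᵢ,lᵢ}ᵢ; λ)` is absolutely summable for every `λ`
outside the positive integers. -/
theorem genF_summable (m : ℕ) (hm : 1 ≤ m) (k l : Fin m → ℕ)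
    (hk : 1 ≤ k ⟨0, hm⟩) (hl : 1 ≤ l ⟨m - 1, by omega⟩)
    (lam : ℂ) (hlam : ∀ n : ℕ, 0 < n → lam ≠ (n : ℂ)) :
    Summable fun n : DecSeq (∑ j, l j) =>
      ‖∏ i : Fin m,
        (1 / ((n.1 (Lpart m l i) : ℂ)) ^ k i *
          ∏ j ∈ Finset.Ico (Lpart m l i) (Lpart m l i + l i), 1 / ((n.1 j : ℂ) - lam))‖ := by
  classical
  obtain ⟨C, hC2, hC⟩ := aux_exists_C lam hlam
  have hC0 : 0 < C := by linarith
  have hL : 1 ≤ ∑ j, l j := by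
    have := Finset.single_le_sum (f := l) (fun j _ => Nat.zero_le _)
      (Finset.mem_univ ⟨m - 1, by omega⟩)
    omega
  set L : ℕ := ∑ j, l j with hLdef
  have hLne : (L : ℝ) ≠ 0 := Nat.cast_ne_zero.mpr (by omega)
  set p : ℝ := 1 + (L : ℝ)⁻¹ with hpdef
  have hp1 : 1 < p := by
    rw [hpdef]
    have : 0 < (L : ℝ)⁻¹ := inv_pos.mpr (by positivity)
    linarith
  set f : ℕ → ℝ := fun n' => ((n' : ℝ) ^ p)⁻¹ with hfdef
  have hf : Summable f := Real.summable_nat_rpow_inv.mpr hp1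
  have hf0 : ∀ n', 0 ≤ f n' := fun n' => inv_nonneg.mpr (Real.rpow_nonneg (Nat.cast_nonneg _) _)
  -- summability of the dominating function
  have hsumF : Summable (fun v : Fin L → ℕ => C ^ L * ∏ j, f (v j)) :=
    (aux_summable_pi_prod hf hf0 L).mul_left _
  have hinj : Function.Injective (fun n : DecSeq L => (fun j : Fin L => n.1 j.val)) := by
    intro a b h
    apply Subtype.ext
    funext i
    by_cases hi : i < L
    · exact congrFun h ⟨i, hi⟩
    · rw [a.2.2.2 i (le_of_not_gt hi), b.2.2.2 i (le_of_not_gt hi)]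
  have hsum : Summable (fun n : DecSeq L => C ^ L * ∏ j : Fin L, f (n.1 j.val)) :=
    hsumF.comp_injective hinj
  refine Summable.of_nonneg_of_le (fun n => norm_nonneg _) ?_ hsum
  -- pointwise bound
  intro n
  obtain ⟨nf, hdec, hposn, hzero⟩ := n
  show ‖∏ i : Fin m,
      (1 / ((nf (Lpart m l i) : ℂ)) ^ k i *
        ∏ j ∈ Finset.Ico (Lpart m l i) (Lpart m l i + l i), 1 / ((nf j : ℂ) - lam))‖
      ≤ C ^ L * ∏ j : Fin L, f (nf j.val)
  have hn1 : ∀ j, j < L → (1 : ℝ) ≤ (nf j : ℝ) := by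
    intro j hj
    exact_mod_cast hposn j hj
  have hnle : ∀ j, j < L → (nf j : ℝ) ≤ (nf 0 : ℝ) := by
    intro j hj
    rcases Nat.eq_zero_or_pos j with h | h
    · rw [h]
    · exact_mod_cast le_of_lt (hdec 0 j h hj)
  have hn0pos : (0 : ℝ) < (nf 0 : ℝ) := lt_of_lt_of_le one_pos (hn1 0 (by omega))
  -- Step 1 : the norm as a real product
  have hnorm : ‖∏ i : Fin m,
      (1 / ((nf (Lpart m l i) : ℂ)) ^ k i *
        ∏ j ∈ Finset.Ico (Lpart m l i) (Lpart m l i + l i), 1 / ((nf j : ℂ) - lam))‖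
      = ∏ i : Fin m, ((((nf (Lpart m l i) : ℝ)) ^ k i)⁻¹ *
        ∏ j ∈ Finset.Ico (Lpart m l i) (Lpart m l i + l i), ‖(nf j : ℂ) - lam‖⁻¹) := by
    rw [norm_prod]
    refine Finset.prod_congr rfl fun i _ => ?_
    rw [norm_mul, norm_prod]
    congr 1
    · rw [norm_div, norm_one, norm_pow, Complex.norm_natCast, one_div]
    · exact Finset.prod_congr rfl fun j _ => by rw [norm_div, norm_one, one_div]
  rw [hnorm]
  -- Step 2 : bound each factor
  have hstep2 : (∏ i : Fin m, ((((nf (Lpart m l i) : ℝ)) ^ k i)⁻¹ *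
        ∏ j ∈ Finset.Ico (Lpart m l i) (Lpart m l i + l i), ‖(nf j : ℂ) - lam‖⁻¹))
      ≤ ∏ i : Fin m, ((if i = ⟨0, hm⟩ then ((nf 0 : ℝ))⁻¹ else 1) *
        ∏ j ∈ Finset.Ico (Lpart m l i) (Lpart m l i + l i), (C * ((nf j : ℝ))⁻¹)) := by
    refine Finset.prod_le_prod (fun i _ => ?_) (fun i _ => ?_)
    · exact mul_nonneg (inv_nonneg.mpr (by positivity))
        (Finset.prod_nonneg fun j _ => inv_nonneg.mpr (norm_nonneg _))
    · have hPi : Lpart m l i < L := aux_Lpart_lt m hm l hl i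
      have hge1 : (1 : ℝ) ≤ (nf (Lpart m l i) : ℝ) := hn1 _ hPi
      refine mul_le_mul ?_ ?_
        (Finset.prod_nonneg fun j _ => inv_nonneg.mpr (norm_nonneg _))
        (by split
            · exact inv_nonneg.mpr (le_of_lt hn0pos)
            · norm_num)
      · have h0i : (0 : ℝ) < (nf (Lpart m l i) : ℝ) := lt_of_lt_of_le one_pos hge1
        split
        · rename_i hi0
          subst hi0
          calc (((nf (Lpart m l ⟨0, hm⟩) : ℝ)) ^ k ⟨0, hm⟩)⁻¹
              ≤ (((nf (Lpart m l ⟨0, hm⟩) : ℝ)) ^ 1)⁻¹ :=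
                inv_anti₀ (pow_pos h0i 1) (pow_le_pow_right₀ hge1 hk)
            _ = ((nf 0 : ℝ))⁻¹ := by rw [pow_one, aux_Lpart_zero m hm l]
        · refine inv_le_one_of_one_le₀ ?_
          calc (1 : ℝ) = 1 ^ k i := (one_pow _).symm
            _ ≤ ((nf (Lpart m l i) : ℝ)) ^ k i := pow_le_pow_left₀ (by norm_num) hge1 _
      · refine Finset.prod_le_prod (fun j _ => inv_nonneg.mpr (norm_nonneg _))
          (fun j hj => ?_)
        have hjL : j < L := lt_of_lt_of_le (Finset.mem_Ico.mp hj).2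
          (by rw [hLdef]; exact aux_Lpart_add_le m l i)
        have hj1 : 1 ≤ nf j := hposn j hjL
        have hCj : (nf j : ℝ) ≤ C * ‖(nf j : ℂ) - lam‖ := hC (nf j) hj1
        have hjpos : (0 : ℝ) < (nf j : ℝ) := by exact_mod_cast hj1
        have hzpos : 0 < ‖(nf j : ℂ) - lam‖ := by nlinarith
        have hdiv : (1 : ℝ) / ‖(nf j : ℂ) - lam‖ ≤ C / (nf j : ℝ) := by
          rw [div_le_div_iff₀ hzpos hjpos]
          nlinarith
        calc ‖(nf j : ℂ) - lam‖⁻¹ = 1 / ‖(nf j : ℂ) - lam‖ := (one_div _).symm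
          _ ≤ C / (nf j : ℝ) := hdiv
          _ = C * ((nf j : ℝ))⁻¹ := div_eq_mul_inv _ _
  -- Step 3 : collapse the blocks into one product over `range L`
  have hstep3 : (∏ i : Fin m, ((if i = ⟨0, hm⟩ then ((nf 0 : ℝ))⁻¹ else 1) *
        ∏ j ∈ Finset.Ico (Lpart m l i) (Lpart m l i + l i), (C * ((nf j : ℝ))⁻¹)))
      = ((nf 0 : ℝ))⁻¹ * ∏ j ∈ Finset.range L, (C * ((nf j : ℝ))⁻¹) := by
    rw [Finset.prod_mul_distrib, aux_prod_blocks m l (fun j => C * ((nf j : ℝ))⁻¹)]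
    rw [← hLdef]
    congr 1
    simpa using Finset.prod_ite_eq' Finset.univ (⟨0, hm⟩ : Fin m)
      (fun _ : Fin m => ((nf 0 : ℝ))⁻¹)
  -- Step 4 : extract the constant
  have hstep4 : ((nf 0 : ℝ))⁻¹ * ∏ j ∈ Finset.range L, (C * ((nf j : ℝ))⁻¹)
      = C ^ L * (((nf 0 : ℝ))⁻¹ * ∏ j ∈ Finset.range L, ((nf j : ℝ))⁻¹) := by
    rw [Finset.prod_mul_distrib, Finset.prod_const, Finset.card_range]
    ring
  -- Step 5 : the rpow comparison
  have hsplit : ∀ j ∈ Finset.range L,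
      f (nf j) = ((nf j : ℝ))⁻¹ * (((nf j : ℝ)) ^ ((L : ℝ)⁻¹))⁻¹ := by
    intro j hj
    have h1 : (0 : ℝ) < (nf j : ℝ) := lt_of_lt_of_le one_pos (hn1 j (Finset.mem_range.mp hj))
    show (((nf j : ℕ) : ℝ) ^ p)⁻¹ = _
    rw [hpdef, Real.rpow_add h1, Real.rpow_one, mul_inv]
  have hkey : ((nf 0 : ℝ))⁻¹ ≤ ∏ j ∈ Finset.range L, (((nf j : ℝ)) ^ ((L : ℝ)⁻¹))⁻¹ := by
    rw [Finset.prod_inv_distrib]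
    have hprodle : (∏ j ∈ Finset.range L, ((nf j : ℝ)) ^ ((L : ℝ)⁻¹)) ≤ (nf 0 : ℝ) := by
      calc ∏ j ∈ Finset.range L, ((nf j : ℝ)) ^ ((L : ℝ)⁻¹)
          ≤ ∏ _j ∈ Finset.range L, ((nf 0 : ℝ)) ^ ((L : ℝ)⁻¹) := by
            refine Finset.prod_le_prod
              (fun j _ => Real.rpow_nonneg (Nat.cast_nonneg _) _)
              (fun j hj => Real.rpow_le_rpow (Nat.cast_nonneg _)
                (hnle j (Finset.mem_range.mp hj)) (by positivity))
        _ = (((nf 0 : ℝ)) ^ ((L : ℝ)⁻¹)) ^ L := by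
            rw [Finset.prod_const, Finset.card_range]
        _ = (nf 0 : ℝ) := by
            rw [← Real.rpow_natCast (((nf 0 : ℝ)) ^ ((L : ℝ)⁻¹)) L,
              ← Real.rpow_mul (Nat.cast_nonneg _), inv_mul_cancel₀ hLne, Real.rpow_one]
    have hprodpos : 0 < ∏ j ∈ Finset.range L, ((nf j : ℝ)) ^ ((L : ℝ)⁻¹) :=
      Finset.prod_pos fun j hj => Real.rpow_pos_of_pos
        (lt_of_lt_of_le one_pos (hn1 j (Finset.mem_range.mp hj))) _
    exact inv_anti₀ hprodpos hprodle
  have hstep5 : ((nf 0 : ℝ))⁻¹ * ∏ j ∈ Finset.range L, ((nf j : ℝ))⁻¹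
      ≤ ∏ j ∈ Finset.range L, f (nf j) := by
    rw [Finset.prod_congr rfl hsplit, Finset.prod_mul_distrib]
    calc ((nf 0 : ℝ))⁻¹ * ∏ j ∈ Finset.range L, ((nf j : ℝ))⁻¹
        ≤ (∏ j ∈ Finset.range L, (((nf j : ℝ)) ^ ((L : ℝ)⁻¹))⁻¹) *
            ∏ j ∈ Finset.range L, ((nf j : ℝ))⁻¹ :=
          mul_le_mul_of_nonneg_right hkey
            (Finset.prod_nonneg fun j _ => inv_nonneg.mpr (Nat.cast_nonneg _))
      _ = (∏ j ∈ Finset.range L, ((nf j : ℝ))⁻¹) *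
            ∏ j ∈ Finset.range L, (((nf j : ℝ)) ^ ((L : ℝ)⁻¹))⁻¹ := mul_comm _ _
  -- put everything together
  calc (∏ i : Fin m, ((((nf (Lpart m l i) : ℝ)) ^ k i)⁻¹ *
        ∏ j ∈ Finset.Ico (Lpart m l i) (Lpart m l i + l i), ‖(nf j : ℂ) - lam‖⁻¹))
      ≤ ∏ i : Fin m, ((if i = ⟨0, hm⟩ then ((nf 0 : ℝ))⁻¹ else 1) *
        ∏ j ∈ Finset.Ico (Lpart m l i) (Lpart m l i + l i), (C * ((nf j : ℝ))⁻¹)) := hstep2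
    _ = ((nf 0 : ℝ))⁻¹ * ∏ j ∈ Finset.range L, (C * ((nf j : ℝ))⁻¹) := hstep3
    _ = C ^ L * (((nf 0 : ℝ))⁻¹ * ∏ j ∈ Finset.range L, ((nf j : ℝ))⁻¹) := hstep4
    _ ≤ C ^ L * ∏ j ∈ Finset.range L, f (nf j) :=
        mul_le_mul_of_nonneg_left hstep5 (by positivity)
    _ = C ^ L * ∏ j : Fin L, f (nf j.val) := by
        rw [Fin.prod_univ_eq_prod_range (fun j => f (nf j)) L]
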